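/- Let m be a real number with 0 < m ≤ 1, let R_m(k₁, k₂) = 4·(cos²(k₁/2)·sin²(k₂/2) + sin²(k₁/2)·cos²(k₂/2))^(3/2) / (m·(sin²(k₁/2) + sin²(k₂/2))), and let C_m = {(k₁, k₂) ∈ [0, π]² : 2·cos(k₁/2)·cos(k₂/2) = m}. Set a = 2·arccos(√(m/2)). Then R_m(k₁, k₂) ≥ 2·√(m − m²/2) for every (k₁, k₂) ∈ C_m; moreover (a, a) ∈ C_m and R_m(a, a) = 2·√(m − m²/2), so the minimum of R_m on C_m equals 2·√(m − m²/2) and is attained at the symmetric point (a, a). -/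
import Mathlib


/-- Curvature radius `R_m(k₁,k₂)` of the level curve `{2 cos(k₁/2) cos(k₂/2) = m}`
(Proposition 8.1). -/
noncomputable def curvRadius (m k₁ k₂ : ℝ) : ℝ :=
  4 * (Real.cos (k₁ / 2) ^ 2 * Real.sin (k₂ / 2) ^ 2
        + Real.sin (k₁ / 2) ^ 2 * Real.cos (k₂ / 2) ^ 2) ^ ((3 : ℝ) / 2) /
    (m * (Real.sin (k₁ / 2) ^ 2 + Real.sin (k₂ / 2) ^ 2))

/-- The piece of the level curve `{2 cos(k₁/2) cos(k₂/2) = m}` in `[0, π]²`. -/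
def levelCurve (m : ℝ) : Set (ℝ × ℝ) :=
  {p : ℝ × ℝ | p.1 ∈ Set.Icc 0 Real.pi ∧ p.2 ∈ Set.Icc 0 Real.pi ∧
    2 * Real.cos (p.1 / 2) * Real.cos (p.2 / 2) = m}

lemma rpow_three_halves (A : ℝ) (hA : 0 ≤ A) :
    A ^ ((3 : ℝ) / 2) = A * Real.sqrt A := by
  rw [Real.sqrt_eq_rpow, ← Real.rpow_one_add' hA (y := 1/2) (by norm_num)]
  norm_num

lemma key_ineq (u v D : ℝ) (hv : 0 < v) (huv : v ≤ u) (hD : 0 < D)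
    (hle : D ≤ 2 * u) :
    2 * Real.sqrt v ≤ 4 * u ^ ((3 : ℝ) / 2) / D := by
  have hu : 0 ≤ u := le_trans hv.le huv
  rw [rpow_three_halves u hu, le_div_iff₀ hD]
  have h1 : Real.sqrt v ≤ Real.sqrt u := Real.sqrt_le_sqrt huv
  have h2 : 0 ≤ Real.sqrt v := Real.sqrt_nonneg v
  nlinarith [mul_le_mul_of_nonneg_left h1 hu, mul_nonneg h2 (sub_nonneg.mpr hle)]

set_option maxHeartbeats 1000000 in
/-- The minimum of the curvature radius on the level curve is `2 √(m − m²/2)`,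
attained at the symmetric point `(a, a)` with `a = 2 arccos √(m/2)`
(Proposition 8.1). -/
theorem curvRadius_min
    (m : ℝ) (hm0 : 0 < m) (hm1 : m ≤ 1) :
    (∀ p ∈ levelCurve m, 2 * Real.sqrt (m - m ^ 2 / 2) ≤ curvRadius m p.1 p.2) ∧
    (2 * Real.arccos (Real.sqrt (m / 2)), 2 * Real.arccos (Real.sqrt (m / 2))) ∈ levelCurve m ∧
    curvRadius m (2 * Real.arccos (Real.sqrt (m / 2))) (2 * Real.arccos (Real.sqrt (m / 2)))
      = 2 * Real.sqrt (m - m ^ 2 / 2) := by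
  have hv : 0 < m - m ^ 2 / 2 := by nlinarith
  set s : ℝ := Real.sqrt (m / 2) with hs
  have hs0 : 0 ≤ s := Real.sqrt_nonneg _
  have hs1 : s ≤ 1 := by
    rw [hs, show (1 : ℝ) = Real.sqrt 1 by simp]
    exact Real.sqrt_le_sqrt (by linarith)
  have hss : s * s = m / 2 := Real.mul_self_sqrt (by linarith)
  have hca : Real.cos (Real.arccos s) = s := Real.cos_arccos (by linarith) hs1
  have haπ : Real.arccos s ≤ Real.pi / 2 := Real.arccos_le_pi_div_two.mpr hs0
  have ha0 : 0 ≤ Real.arccos s := Real.arccos_nonneg s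
  have hhalf : 2 * Real.arccos s / 2 = Real.arccos s := by ring
  have hsin : Real.sin (Real.arccos s) ^ 2 = 1 - m / 2 := by
    rw [Real.sin_sq, hca]; nlinarith
  have hIcc : 2 * Real.arccos s ∈ Set.Icc 0 Real.pi :=
    ⟨by linarith, by linarith [Real.pi_pos]⟩
  refine ⟨?_, ⟨hIcc, hIcc, ?_⟩, ?_⟩
  · rintro ⟨k₁, k₂⟩ ⟨⟨h10, h1π⟩, ⟨h20, h2π⟩, hc⟩
    dsimp only at h10 h1π h20 h2π hc ⊢
    set x := Real.cos (k₁ / 2) ^ 2 with hx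
    set y := Real.cos (k₂ / 2) ^ 2 with hy
    have hx1 : x ≤ 1 := Real.cos_sq_le_one _
    have hy1 : y ≤ 1 := Real.cos_sq_le_one _
    have hc1 : 0 ≤ Real.cos (k₁ / 2) :=
      Real.cos_nonneg_of_mem_Icc ⟨by linarith, by linarith⟩
    have hc2 : 0 ≤ Real.cos (k₂ / 2) :=
      Real.cos_nonneg_of_mem_Icc ⟨by linarith, by linarith⟩
    have hxy : x * y = m ^ 2 / 4 := by rw [hx, hy]; nlinarith [hc]
    have ht : m ≤ x + y := by nlinarith [sq_nonneg (Real.cos (k₁ / 2) - Real.cos (k₂ / 2))]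
    have ht2 : x + y ≤ 5 / 4 := by nlinarith [mul_nonneg (sub_nonneg.mpr hx1) (sub_nonneg.mpr hy1)]
    have hA : Real.cos (k₁ / 2) ^ 2 * Real.sin (k₂ / 2) ^ 2
        + Real.sin (k₁ / 2) ^ 2 * Real.cos (k₂ / 2) ^ 2 = (x + y) - m ^ 2 / 2 := by
      rw [Real.sin_sq, Real.sin_sq, ← hx, ← hy]; linarith [hxy]
    have hD : m * (Real.sin (k₁ / 2) ^ 2 + Real.sin (k₂ / 2) ^ 2)
        = m * (2 - (x + y)) := by
      rw [Real.sin_sq, Real.sin_sq, ← hx, ← hy]; ring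
    unfold curvRadius
    rw [hA, hD]
    have hDpos : 0 < m * (2 - (x + y)) := mul_pos hm0 (by linarith)
    have hle : m * (2 - (x + y)) ≤ 2 * ((x + y) - m ^ 2 / 2) := by
      nlinarith [mul_nonneg hm0.le (sub_nonneg.mpr ht)]
    exact key_ineq _ _ _ hv (by linarith) hDpos hle
  · dsimp only
    rw [hhalf, hca]; linarith [hss]
  · unfold curvRadius
    rw [hhalf, hca, hsin]
    have h1 : s ^ 2 * (1 - m / 2) + (1 - m / 2) * s ^ 2 = m - m ^ 2 / 2 := by
      rw [sq]; nlinarith [hss]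
    have h2 : m * ((1 - m / 2) + (1 - m / 2)) = m * (2 - m) := by ring
    rw [h1, h2, rpow_three_halves _ hv.le]
    have h2v : m * (2 - m) = 2 * (m - m ^ 2 / 2) := by ring
    rw [h2v, div_eq_iff (by positivity)]
    ring
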